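/- arXiv:2202.02495 — 2 statements merged into one kernel-verified Lean document; each statement's English description precedes it below -/
import Mathlib

section
/- Let q ∈ [0,1) and let Z be a metric space. Two labeled graphs (G₁, ℓ_{G₁}) and (G₂, ℓ_{G₂}) with labels in Z are isomorphic as labeled graphs (i.e., there is a graph isomorphism ψ : V_{G₁} → V_{G₂} with ℓ_{G₁} = ℓ_{G₂} ∘ ψ) if and only if the induced labeled measure Markov chains (𝒳_q(G₁), ℓ_{G₁}) and (𝒳_q(G₂), ℓ_{G₂}) are isomorphic as LMMCs. -/
open scoped BigOperators NNReal

namespace WLGW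

variable {X Y W : Type*}

/-- A probability mass function on a finite type. -/
def IsPMF [Fintype X] (p : X → ℝ) : Prop :=
  (∀ x, 0 ≤ p x) ∧ ∑ x, p x = 1

/-- `γ` is a coupling of `p` and `q`. -/
def IsCoupling [Fintype X] [Fintype Y] (p : X → ℝ) (q : Y → ℝ) (γ : X → Y → ℝ) : Prop :=
  (∀ x y, 0 ≤ γ x y) ∧ (∀ x, ∑ y, γ x y = p x) ∧ (∀ y, ∑ x, γ x y = q y)

/-- `(m, μ)` is a measure Markov chain: each `m x` is a pmf, and `μ` is a fully supported
stationary pmf. -/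
def IsMMC [Fintype X] (m : X → X → ℝ) (μ : X → ℝ) : Prop :=
  (∀ x, IsPMF (m x)) ∧ IsPMF μ ∧ (∀ x, 0 < μ x) ∧ (∀ x', ∑ x, m x x' * μ x = μ x')

/-- `dX` is a metric on the finite type `X`. -/
def IsMetricOn [Fintype X] (dX : X → X → ℝ) : Prop :=
  (∀ x, dX x x = 0) ∧ (∀ x y, dX x y = dX y x) ∧ (∀ x y, x ≠ y → 0 < dX x y) ∧
    (∀ x y z, dX x z ≤ dX x y + dX y z)

/-- The iterated Weisfeiler–Lehman cost `D_k`. -/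
noncomputable def costIter [Fintype X] [Fintype Y] (mX : X → X → ℝ) (mY : Y → Y → ℝ)
    (D0 : X → Y → ℝ) : ℕ → X → Y → ℝ
  | 0 => D0
  | k + 1 => fun x y => sInf {r : ℝ | ∃ γ : X → Y → ℝ, IsCoupling (mX x) (mY y) γ ∧
      r = ∑ x', ∑ y', costIter mX mY D0 k x' y' * γ x' y'}

/-- The Weisfeiler–Lehman distance of depth `k` between two labeled measure Markov chains. -/
noncomputable def dWL {Z : Type*} [PseudoMetricSpace Z] [Fintype X] [Fintype Y]
    (mX : X → X → ℝ) (μX : X → ℝ) (ℓX : X → Z)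
    (mY : Y → Y → ℝ) (μY : Y → ℝ) (ℓY : Y → Z) (k : ℕ) : ℝ :=
  sInf {r : ℝ | ∃ γ : X → Y → ℝ, IsCoupling μX μY γ ∧
      r = ∑ x, ∑ y, costIter mX mY (fun x y => dist (ℓX x) (ℓY y)) k x y * γ x y}

/-- The absolute Weisfeiler–Lehman distance. -/
noncomputable def dWLsup {Z : Type*} [PseudoMetricSpace Z] [Fintype X] [Fintype Y]
    (mX : X → X → ℝ) (μX : X → ℝ) (ℓX : X → Z)
    (mY : Y → Y → ℝ) (μY : Y → ℝ) (ℓY : Y → Z) : ℝ :=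
  ⨆ k : ℕ, dWL mX μX ℓX mY μY ℓY k

/-- Isomorphism of labeled measure Markov chains. -/
def LMMCIso {Z : Type*} [Fintype X] [Fintype Y]
    (mX : X → X → ℝ) (μX : X → ℝ) (ℓX : X → Z)
    (mY : Y → Y → ℝ) (μY : Y → ℝ) (ℓY : Y → Z) : Prop :=
  ∃ ψ : X ≃ Y, (∀ x, ℓY (ψ x) = ℓX x) ∧ (∀ x x', mY (ψ x) (ψ x') = mX x x') ∧
    (∀ x, μY (ψ x) = μX x)

/-- The `q`-Markov kernel of a finite simple graph. -/
noncomputable def graphKernel {V : Type*} [Fintype V] [DecidableEq V] (G : SimpleGraph V) [DecidableRel G.Adj]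
    (q : ℝ) (v v' : V) : ℝ :=
  if G.degree v = 0 then (if v' = v then 1 else 0)
  else (if v' = v then q else 0) + (if G.Adj v v' then (1 - q) / (G.degree v : ℝ) else 0)

/-- The stationary degree measure of a finite simple graph. -/
noncomputable def graphMu {V : Type*} [Fintype V] (G : SimpleGraph V) [DecidableRel G.Adj]
    (v : V) : ℝ :=
  ((max (G.degree v) 1 : ℕ) : ℝ) / ∑ v', ((max (G.degree v') 1 : ℕ) : ℝ)

/-- The type of depth-`k` Weisfeiler–Lehman labels over an initial label set `Z`. -/
def WLType (Z : Type*) : ℕ → Type _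
  | 0 => Z
  | k + 1 => WLType Z k × Multiset (WLType Z k)

/-- The Weisfeiler–Lehman label hierarchy `ℓ^k` of a labeled graph. -/
def wlLabel {V Z : Type*} [Fintype V] (G : SimpleGraph V) [DecidableRel G.Adj] (ℓ : V → Z) :
    (k : ℕ) → V → WLType Z k
  | 0 => ℓ
  | k + 1 => fun v => (wlLabel G ℓ k v, (G.neighborFinset v).val.map (wlLabel G ℓ k))

/-- The multiset `L_k((G, ℓ))` of depth-`k` WL labels of all vertices. -/
def wlMultiset {V Z : Type*} [Fintype V] (G : SimpleGraph V) [DecidableRel G.Adj]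
    (ℓ : V → Z) (k : ℕ) : Multiset (WLType Z k) :=
  Finset.univ.val.map (wlLabel G ℓ k)

/-- The WL test distinguishes two labeled graphs. -/
def WLDistinguishes {V₁ V₂ Z : Type*} [Fintype V₁] [Fintype V₂]
    (G₁ : SimpleGraph V₁) [DecidableRel G₁.Adj] (ℓ₁ : V₁ → Z)
    (G₂ : SimpleGraph V₂) [DecidableRel G₂.Adj] (ℓ₂ : V₂ → Z) : Prop :=
  ∃ k, wlMultiset G₁ ℓ₁ k ≠ wlMultiset G₂ ℓ₂ k

/-- The relabeling `ℓ^g(v) = g(ℓ(v), deg v, |V|)`. -/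
def relabel {V Z Z₁ : Type*} [Fintype V] (G : SimpleGraph V) [DecidableRel G.Adj]
    (ℓ : V → Z) (g : Z × ℕ × ℕ → Z₁) : V → Z₁ :=
  fun v => g (ℓ v, G.degree v, Fintype.card V)

/-- `kpow m k = m^{⊗k}`, the `k`-step Markov kernel (`kpow m 0` is the identity kernel). -/
def kpow [Fintype X] [DecidableEq X] (m : X → X → ℝ) : ℕ → X → X → ℝ
  | 0 => fun x x' => if x' = x then 1 else 0
  | k + 1 => fun x x'' => ∑ x', kpow m k x' x'' * m x x'

/-- The Wasserstein distance between the pushforwards `(ℓX)_# p` and `(ℓY)_# q`, expressed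
through couplings of `p` and `q`. -/
noncomputable def wassersteinCost {Z : Type*} [PseudoMetricSpace Z] [Fintype X] [Fintype Y]
    (ℓX : X → Z) (ℓY : Y → Z) (p : X → ℝ) (q : Y → ℝ) : ℝ :=
  sInf {r : ℝ | ∃ γ : X → Y → ℝ, IsCoupling p q γ ∧
      r = ∑ x, ∑ y, dist (ℓX x) (ℓY y) * γ x y}

/-- The lower bound `d_WLLB^(k)` for the WL distance. -/
noncomputable def dWLLB {Z : Type*} [PseudoMetricSpace Z] [Fintype X] [Fintype Y]
    [DecidableEq X] [DecidableEq Y]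
    (mX : X → X → ℝ) (μX : X → ℝ) (ℓX : X → Z)
    (mY : Y → Y → ℝ) (μY : Y → ℝ) (ℓY : Y → Z) (k : ℕ) : ℝ :=
  sInf {r : ℝ | ∃ γ : X → Y → ℝ, IsCoupling μX μY γ ∧
      r = ∑ x, ∑ y, wassersteinCost ℓX ℓY (kpow mX k x) (kpow mY k y) * γ x y}

/-- Dimension sequence of an MCNN: `mcnnDim d dims 0 = d`, then `dims`. -/
def mcnnDim (d : ℕ) (dims : ℕ → ℕ) : ℕ → ℕ
  | 0 => d
  | i + 1 => dims i

/-- A `k`-layer Markov chain neural network on `ℝ^d`-LMMCs: Lipschitz maps `φ_1, …, φ_{k+1}`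
followed by a continuous map `ψ`. -/
structure MCNN (d k : ℕ) where
  dims : ℕ → ℕ
  φ : (i : ℕ) → EuclideanSpace ℝ (Fin (mcnnDim d dims i)) →
      EuclideanSpace ℝ (Fin (mcnnDim d dims (i + 1)))
  φ_lip : ∀ i, ∃ K : ℝ≥0, LipschitzWith K (φ i)
  ψ : EuclideanSpace ℝ (Fin (mcnnDim d dims (k + 1))) → ℝ
  ψ_cont : Continuous ψ

/-- Labels after `j` layers of an MCNN (the map `F_{φ_j} ∘ ⋯ ∘ F_{φ_1}`). -/
noncomputable def mcnnLabel {X : Type*} [Fintype X] {d k : ℕ} (N : MCNN d k)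
    (m : X → X → ℝ) (ℓ : X → EuclideanSpace ℝ (Fin d)) :
    (j : ℕ) → X → EuclideanSpace ℝ (Fin (mcnnDim d N.dims j))
  | 0 => ℓ
  | j + 1 => fun x => ∑ x', m x x' • N.φ j (mcnnLabel N m ℓ j x')

/-- Evaluation of an MCNN on an `ℝ^d`-LMMC: `ψ ∘ S_{φ_{k+1}} ∘ F_{φ_k} ∘ ⋯ ∘ F_{φ_1}`. -/
noncomputable def mcnnEval {X : Type*} [Fintype X] {d k : ℕ} (N : MCNN d k)
    (m : X → X → ℝ) (μ : X → ℝ) (ℓ : X → EuclideanSpace ℝ (Fin d)) : ℝ :=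
  N.ψ (∑ x, μ x • N.φ k (mcnnLabel N m ℓ k x))

/-- `k`-step couplings between the Markov kernels `mX` and `mY` (defined for `k ≥ 1`). -/
def IsStepCoupling [Fintype X] [Fintype Y] (mX : X → X → ℝ) (mY : Y → Y → ℝ) :
    ℕ → (X → Y → X → Y → ℝ) → Prop
  | 0, _ => False
  | 1, ν => ∀ x y, IsCoupling (mX x) (mY y) (ν x y)
  | k + 2, ν => ∃ νk ν1 : X → Y → X → Y → ℝ,
      IsStepCoupling mX mY (k + 1) νk ∧ (∀ x y, IsCoupling (mX x) (mY y) (ν1 x y)) ∧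
      ν = fun x y x' y' => ∑ x'', ∑ y'', νk x'' y'' x' y' * ν1 x y x'' y''

/-- The `k`-distortion `dis^(k)(γ, ν)`. -/
def disk [Fintype X] [Fintype Y] (dX : X → X → ℝ) (dY : Y → Y → ℝ)
    (γ : X → Y → ℝ) (ν : X → Y → X → Y → ℝ) : ℝ :=
  ∑ x, ∑ y, ∑ x'', ∑ y'', ∑ x', ∑ y',
    |dX x x' - dY y y'| * ν x'' y'' x' y' * γ x'' y'' * γ x y

/-- The `k`-Gromov–Wasserstein distance between Markov chain metric spaces. -/
noncomputable def dGWk [Fintype X] [Fintype Y]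
    (mX : X → X → ℝ) (dX : X → X → ℝ) (μX : X → ℝ)
    (mY : Y → Y → ℝ) (dY : Y → Y → ℝ) (μY : Y → ℝ) (k : ℕ) : ℝ :=
  sInf {r : ℝ | ∃ (γ : X → Y → ℝ) (ν : X → Y → X → Y → ℝ),
      IsCoupling μX μY γ ∧ IsStepCoupling mX mY k ν ∧ r = disk dX dY γ ν}

/-- The absolute Gromov–Wasserstein distance between MCMSs: `sup_{k ≥ 1} d_GW^(k)`. -/
noncomputable def dGWMCMS [Fintype X] [Fintype Y]
    (mX : X → X → ℝ) (dX : X → X → ℝ) (μX : X → ℝ)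
    (mY : Y → Y → ℝ) (dY : Y → Y → ℝ) (μY : Y → ℝ) : ℝ :=
  ⨆ k : ℕ, dGWk mX dX μX mY dY μY (k + 1)

/-- Isomorphism of Markov chain metric spaces. -/
def MCMSIso [Fintype X] [Fintype Y]
    (mX : X → X → ℝ) (dX : X → X → ℝ) (μX : X → ℝ)
    (mY : Y → Y → ℝ) (dY : Y → Y → ℝ) (μY : Y → ℝ) : Prop :=
  ∃ ψ : X ≃ Y, (∀ x x', dY (ψ x) (ψ x') = dX x x') ∧
    (∀ x x', mY (ψ x) (ψ x') = mX x x') ∧ (∀ x, μY (ψ x) = μX x)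

/-- The decoupled Gromov–Wasserstein distance between finite metric measure spaces. -/
noncomputable def dGWbi [Fintype X] [Fintype Y]
    (dX : X → X → ℝ) (μX : X → ℝ) (dY : Y → Y → ℝ) (μY : Y → ℝ) : ℝ :=
  sInf {r : ℝ | ∃ γ γ' : X → Y → ℝ, IsCoupling μX μY γ ∧ IsCoupling μX μY γ' ∧
      r = ∑ x, ∑ y, ∑ x', ∑ y', |dX x x' - dY y y'| * γ' x' y' * γ x y}

/-- `k`-step couplings between the measures `μX` and `μY`
(`k = 0` gives ordinary couplings). -/
def IsMeasureStepCoupling [Fintype X] [Fintype Y] (mX : X → X → ℝ) (mY : Y → Y → ℝ)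
    (μX : X → ℝ) (μY : Y → ℝ) : ℕ → (X → Y → ℝ) → Prop
  | 0, γ => IsCoupling μX μY γ
  | k + 1, γk => ∃ (γ : X → Y → ℝ) (ν : X → Y → X → Y → ℝ),
      IsCoupling μX μY γ ∧ IsStepCoupling mX mY (k + 1) ν ∧
      γk = fun x' y' => ∑ x, ∑ y, ν x y x' y' * γ x y

/-- The WWL label iteration. -/
noncomputable def wwlLabel {V : Type*} [Fintype V] {d : ℕ} (G : SimpleGraph V)
    [DecidableRel G.Adj] (ℓ : V → EuclideanSpace ℝ (Fin d)) :
    ℕ → V → EuclideanSpace ℝ (Fin d)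
  | 0 => ℓ
  | i + 1 => fun v => (1 / 2 : ℝ) •
      (wwlLabel G ℓ i v + ((G.degree v : ℝ))⁻¹ • ∑ v' ∈ G.neighborFinset v, wwlLabel G ℓ i v')

/-- The stacked WWL label `L^k_G = (ℓ^0, …, ℓ^k)`, valued in Euclidean `ℝ^{d(k+1)}`. -/
noncomputable def stackedLabel {V : Type*} [Fintype V] {d : ℕ} (G : SimpleGraph V)
    [DecidableRel G.Adj] (ℓ : V → EuclideanSpace ℝ (Fin d)) (k : ℕ) (v : V) :
    EuclideanSpace ℝ (Fin (k + 1) × Fin d) :=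
  WithLp.toLp 2 (fun p => wwlLabel G ℓ (p.1 : ℕ) v p.2)

lemma degree_eq_of_iso {V₁ V₂ : Type*} [Fintype V₁] [Fintype V₂]
    [DecidableEq V₁] [DecidableEq V₂]
    (G₁ : SimpleGraph V₁) [DecidableRel G₁.Adj] (G₂ : SimpleGraph V₂) [DecidableRel G₂.Adj]
    (ψ : V₁ ≃ V₂) (h : ∀ u v, G₂.Adj (ψ u) (ψ v) ↔ G₁.Adj u v) (v : V₁) :
    G₂.degree (ψ v) = G₁.degree v := by
  have hset : G₂.neighborFinset (ψ v) = (G₁.neighborFinset v).map ψ.toEmbedding := by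
    ext w
    simp only [SimpleGraph.mem_neighborFinset, Finset.mem_map, Equiv.coe_toEmbedding]
    constructor
    · intro hw
      exact ⟨ψ.symm w, (h v (ψ.symm w)).mp (by simpa using hw), ψ.apply_symm_apply w⟩
    · rintro ⟨u, hu, rfl⟩
      exact (h v u).mpr hu
  have : G₂.degree (ψ v) = (G₂.neighborFinset (ψ v)).card := rfl
  rw [this, hset, Finset.card_map]
  rfl

lemma adj_iff_kernel {V : Type*} [Fintype V] [DecidableEq V]
    (G : SimpleGraph V) [DecidableRel G.Adj] (q : ℝ) (hq0 : 0 ≤ q) (hq1 : q < 1) (u v : V) :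
    G.Adj u v ↔ (v ≠ u ∧ graphKernel G q u v ≠ 0) := by
  unfold graphKernel
  by_cases hd : G.degree u = 0
  · have hna : ¬ G.Adj u v := by
      intro hadj
      have h2 : 0 < G.degree u := (G.degree_pos_iff_exists_adj u).mpr ⟨v, hadj⟩
      omega
    simp only [hd, if_true]
    constructor
    · intro h; exact absurd h hna
    · rintro ⟨hne, hk⟩
      exact absurd (by simp [hne]) hk
  · simp only [hd, if_false]
    have hdpos : (0 : ℝ) < (G.degree u : ℝ) := by
      exact_mod_cast Nat.pos_of_ne_zero hd
    constructor
    · intro hadj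
      have hne : v ≠ u := (G.ne_of_adj hadj).symm ∘ Eq.symm ∘ Eq.symm
      refine ⟨(G.ne_of_adj hadj).symm, ?_⟩
      have : (if v = u then q else 0) + (if G.Adj u v then (1 - q) / (G.degree u : ℝ) else 0)
          = (1 - q) / (G.degree u : ℝ) := by
        simp [hadj, (G.ne_of_adj hadj).symm]
      rw [this]
      have h1q : (0:ℝ) < 1 - q := by linarith
      positivity
    · rintro ⟨hne, hk⟩
      by_contra hna
      exact hk (by simp [hne, hna])

theorem labeled_graph_iso_iff_lmmc_iso {V₁ V₂ Z : Type*} [Fintype V₁] [Fintype V₂]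
    [DecidableEq V₁] [DecidableEq V₂] [MetricSpace Z]
    (G₁ : SimpleGraph V₁) [DecidableRel G₁.Adj] (G₂ : SimpleGraph V₂) [DecidableRel G₂.Adj]
    (ℓ₁ : V₁ → Z) (ℓ₂ : V₂ → Z) (q : ℝ) (hq0 : 0 ≤ q) (hq1 : q < 1) :
    (∃ ψ : V₁ ≃ V₂, (∀ u v, G₂.Adj (ψ u) (ψ v) ↔ G₁.Adj u v) ∧ (∀ v, ℓ₂ (ψ v) = ℓ₁ v)) ↔
      LMMCIso (graphKernel G₁ q) (graphMu G₁) ℓ₁ (graphKernel G₂ q) (graphMu G₂) ℓ₂ := by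
  constructor
  · rintro ⟨ψ, hadj, hlab⟩
    have hdeg : ∀ v, G₂.degree (ψ v) = G₁.degree v := degree_eq_of_iso G₁ G₂ ψ hadj
    refine ⟨ψ, hlab, ?_, ?_⟩
    · intro x x'
      unfold graphKernel
      rw [hdeg x]
      simp only [Equiv.apply_eq_iff_eq, hadj]
    · intro x
      unfold graphMu
      rw [hdeg x]
      congr 1
      rw [← Equiv.sum_comp ψ]
      exact Finset.sum_congr rfl fun v _ => by rw [hdeg v]
  · rintro ⟨ψ, hlab, hm, hμ⟩
    refine ⟨ψ, ?_, hlab⟩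
    intro u v
    rw [adj_iff_kernel G₂ q hq0 hq1, adj_iff_kernel G₁ q hq0 hq1, hm u v]
    simp [Ne, ψ.apply_eq_iff_eq]

end WLGW
end

section
/- For every integer k ≥ 0 and all Z-LMMCs (𝒳, ℓ_X) and (𝒴, ℓ_Y), one has d_WL^(k)((𝒳,ℓ_X),(𝒴,ℓ_Y)) ≤ d_WL^(k+1)((𝒳,ℓ_X),(𝒴,ℓ_Y)). -/
open scoped BigOperators NNReal

namespace WLGW

variable {X Y W : Type*}

lemma prod_isCoupling [Fintype X] [Fintype Y] {p : X → ℝ} {q : Y → ℝ}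
    (hp : IsPMF p) (hq : IsPMF q) : IsCoupling p q (fun x y => p x * q y) := by
  refine ⟨fun x y => mul_nonneg (hp.1 x) (hq.1 y), fun x => ?_, fun y => ?_⟩
  · rw [← Finset.mul_sum, hq.2, mul_one]
  · rw [← Finset.sum_mul, hp.2, one_mul]

lemma costIter_nonneg [Fintype X] [Fintype Y] {mX : X → X → ℝ} {mY : Y → Y → ℝ}
    {D0 : X → Y → ℝ} (h0 : ∀ x y, 0 ≤ D0 x y) :
    ∀ k x y, 0 ≤ costIter mX mY D0 k x y := by
  intro k
  induction k with
  | zero => exact h0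
  | succ k ih =>
    intro x y
    apply Real.sInf_nonneg
    rintro r ⟨γ, hγ, rfl⟩
    exact Finset.sum_nonneg fun x' _ => Finset.sum_nonneg fun y' _ =>
      mul_nonneg (ih x' y') (hγ.1 x' y')

lemma sum_swap4 [Fintype X] [Fintype Y] (f : X → Y → X → Y → ℝ) :
    ∑ x', ∑ y', ∑ x, ∑ y, f x' y' x y = ∑ x, ∑ y, ∑ x', ∑ y', f x' y' x y := by
  simp_rw [← Fintype.sum_prod_type']
  exact Fintype.sum_equiv
    ⟨fun p => (p.2.2.1, p.2.2.2, p.1, p.2.1), fun p => (p.2.2.1, p.2.2.2, p.1, p.2.1),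
      fun p => rfl, fun p => rfl⟩ _ _ (fun p => rfl)

theorem dWL_mono {X Y Z : Type*} [Fintype X] [Fintype Y] [MetricSpace Z]
    (mX : X → X → ℝ) (μX : X → ℝ) (ℓX : X → Z)
    (mY : Y → Y → ℝ) (μY : Y → ℝ) (ℓY : Y → Z)
    (hX : IsMMC mX μX) (hY : IsMMC mY μY) (k : ℕ) :
    dWL mX μX ℓX mY μY ℓY k ≤ dWL mX μX ℓX mY μY ℓY (k + 1) := by
  classical
  set D0 : X → Y → ℝ := fun x y => dist (ℓX x) (ℓY y) with hD0def
  have hD0 : ∀ x y, 0 ≤ D0 x y := fun x y => dist_nonneg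
  have hC := costIter_nonneg (mX := mX) (mY := mY) hD0
  unfold dWL
  refine le_csInf ⟨_, ⟨_, prod_isCoupling hX.2.1 hY.2.1, rfl⟩⟩ ?_
  rintro r ⟨γ, hγ, rfl⟩
  refine le_of_forall_pos_le_add ?_
  intro ε hε
  -- choose near-optimal couplings ν x y of (mX x) and (mY y)
  have hchoice : ∀ x y, ∃ ν : X → Y → ℝ, IsCoupling (mX x) (mY y) ν ∧
      ∑ x', ∑ y', costIter mX mY D0 k x' y' * ν x' y' <
        costIter mX mY D0 (k + 1) x y + ε := by
    intro x y
    have hne : {r : ℝ | ∃ ν : X → Y → ℝ, IsCoupling (mX x) (mY y) ν ∧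
        r = ∑ x', ∑ y', costIter mX mY D0 k x' y' * ν x' y'}.Nonempty :=
      ⟨_, ⟨_, prod_isCoupling (hX.1 x) (hY.1 y), rfl⟩⟩
    obtain ⟨a, ⟨ν, hν, rfl⟩, ha⟩ := Real.lt_sInf_add_pos hne hε
    exact ⟨ν, hν, ha⟩
  choose ν hν hlt using hchoice
  set γ' : X → Y → ℝ := fun x' y' => ∑ x, ∑ y, ν x y x' y' * γ x y with hγ'def
  have hγ' : IsCoupling μX μY γ' := by
    refine ⟨fun x' y' => Finset.sum_nonneg fun x _ => Finset.sum_nonneg fun y _ =>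
      mul_nonneg ((hν x y).1 x' y') (hγ.1 x y), fun x' => ?_, fun y' => ?_⟩
    · have : ∑ y', γ' x' y' = ∑ x, ∑ y, (∑ y', ν x y x' y') * γ x y := by
        simp only [hγ'def]
        rw [Finset.sum_comm]
        refine Finset.sum_congr rfl fun x _ => ?_
        rw [Finset.sum_comm]
        exact Finset.sum_congr rfl fun y _ => by rw [Finset.sum_mul]
      rw [this]
      have : ∑ x, ∑ y, (∑ y', ν x y x' y') * γ x y = ∑ x, mX x x' * μX x := by
        refine Finset.sum_congr rfl fun x _ => ?_
        rw [← hγ.2.1 x, Finset.mul_sum]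
        exact Finset.sum_congr rfl fun y _ => by rw [(hν x y).2.1 x']
      rw [this]; exact hX.2.2.2 x'
    · have : ∑ x', γ' x' y' = ∑ x, ∑ y, (∑ x', ν x y x' y') * γ x y := by
        simp only [hγ'def]
        rw [Finset.sum_comm]
        refine Finset.sum_congr rfl fun x _ => ?_
        rw [Finset.sum_comm]
        exact Finset.sum_congr rfl fun y _ => by rw [Finset.sum_mul]
      rw [this]
      have : ∑ x, ∑ y, (∑ x', ν x y x' y') * γ x y = ∑ y, ∑ x, mY y y' * γ x y := by
        rw [Finset.sum_comm]
        refine Finset.sum_congr rfl fun y _ => ?_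
        refine Finset.sum_congr rfl fun x _ => ?_
        rw [(hν x y).2.2 y']
      rw [this]
      have : ∑ y, ∑ x, mY y y' * γ x y = ∑ y, mY y y' * μY y := by
        refine Finset.sum_congr rfl fun y _ => ?_
        rw [← Finset.mul_sum, hγ.2.2 y]
      rw [this]; exact hY.2.2.2 y'
  have hbdd : BddBelow {r : ℝ | ∃ γ : X → Y → ℝ, IsCoupling μX μY γ ∧
      r = ∑ x, ∑ y, costIter mX mY D0 k x y * γ x y} := by
    refine ⟨0, ?_⟩
    rintro r ⟨γ₀, hγ₀, rfl⟩
    exact Finset.sum_nonneg fun x _ => Finset.sum_nonneg fun y _ =>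
      mul_nonneg (hC k x y) (hγ₀.1 x y)
  have hmem : (∑ x', ∑ y', costIter mX mY D0 k x' y' * γ' x' y') ∈
      {r : ℝ | ∃ γ : X → Y → ℝ, IsCoupling μX μY γ ∧
        r = ∑ x, ∑ y, costIter mX mY D0 k x y * γ x y} := ⟨γ', hγ', rfl⟩
  refine (csInf_le hbdd hmem).trans ?_
  have key : ∑ x', ∑ y', costIter mX mY D0 k x' y' * γ' x' y' =
      ∑ x, ∑ y, (∑ x', ∑ y', costIter mX mY D0 k x' y' * ν x y x' y') * γ x y := by
    simp only [hγ'def]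
    have : ∀ x' y', costIter mX mY D0 k x' y' * (∑ x, ∑ y, ν x y x' y' * γ x y) =
        ∑ x, ∑ y, costIter mX mY D0 k x' y' * ν x y x' y' * γ x y := by
      intro x' y'
      rw [Finset.mul_sum]
      exact Finset.sum_congr rfl fun x _ => by rw [Finset.mul_sum]; simp [mul_assoc]
    simp_rw [this]
    rw [sum_swap4 (fun x' y' x y => costIter mX mY D0 k x' y' * ν x y x' y' * γ x y)]
    refine Finset.sum_congr rfl fun x _ => Finset.sum_congr rfl fun y _ => ?_
    rw [Finset.sum_mul]
    exact Finset.sum_congr rfl fun x' _ => by rw [Finset.sum_mul]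
  rw [key]
  have hsum1 : ∑ x, ∑ y, γ x y = 1 := by
    have : ∀ x, ∑ y, γ x y = μX x := hγ.2.1
    simp_rw [this]
    exact hX.2.1.2
  calc ∑ x, ∑ y, (∑ x', ∑ y', costIter mX mY D0 k x' y' * ν x y x' y') * γ x y
      ≤ ∑ x, ∑ y, (costIter mX mY D0 (k + 1) x y + ε) * γ x y := by
        refine Finset.sum_le_sum fun x _ => Finset.sum_le_sum fun y _ => ?_
        exact mul_le_mul_of_nonneg_right (le_of_lt (hlt x y)) (hγ.1 x y)
    _ = (∑ x, ∑ y, costIter mX mY D0 (k + 1) x y * γ x y) + ε := by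
        simp_rw [add_mul, Finset.sum_add_distrib, ← Finset.mul_sum]
        rw [hsum1, mul_one]

end WLGW
end
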